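/- For integers n ≥ 1, D ≥ 1, 0 ≤ j < D, and real q with 0 ≤ q ≤ 1, define E(j) = C(j+n-1, n-1)·(1 - q^{C(D-j+n-1, n-1)}). Then the sequence E(0), E(1), ..., E(D-1) is log-concave, i.e., E(j)^2 ≥ E(j-1)·E(j+1) for all 1 ≤ j ≤ D-2; in particular it is unimodal. -/

import Mathlib

open Real

/-- Log-concavity of binomial coefficients in the upper index. -/
lemma nat_lc (m k : ℕ) :
    Nat.choose m k * Nat.choose (m + 2) k ≤ Nat.choose (m + 1) k * Nat.choose (m + 1) k := by
  rcases le_or_gt k m with hk | hk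
  · have h1 := Nat.choose_mul_succ_eq m k
    have h2 := Nat.choose_mul_succ_eq (m + 1) k
    have hc : 0 < (m + 1) * (m + 2 - k) := by
      have : 0 < m + 2 - k := by omega
      positivity
    apply Nat.le_of_mul_le_mul_right _ hc
    have hineq : (m + 1 - k) * (m + 2) ≤ (m + 1) * (m + 2 - k) := by
      zify [show k ≤ m + 1 by omega, show k ≤ m + 2 by omega]
      nlinarith [Int.ofNat_nonneg k]
    calc Nat.choose m k * Nat.choose (m + 2) k * ((m + 1) * (m + 2 - k))
        = (Nat.choose m k * (m + 1)) * (Nat.choose (m + 2) k * (m + 2 - k)) := by ring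
      _ = (Nat.choose (m + 1) k * (m + 1 - k)) * (Nat.choose (m + 1) k * (m + 2)) := by
          rw [h1, ← h2]
      _ = Nat.choose (m + 1) k * Nat.choose (m + 1) k * ((m + 1 - k) * (m + 2)) := by ring
      _ ≤ Nat.choose (m + 1) k * Nat.choose (m + 1) k * ((m + 1) * (m + 2 - k)) :=
          Nat.mul_le_mul_left _ hineq
  · have h0 : Nat.choose m k = 0 := Nat.choose_eq_zero_of_lt hk
    simp [h0]

/-- The function `s ↦ s/(e^s - 1)` is antitone on positives, in cross-multiplied form. -/
lemma phi_anti {s t : ℝ} (hs : 0 < s) (hst : s ≤ t) :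
    t * (Real.exp s - 1) ≤ s * (Real.exp t - 1) := by
  have hA : (0 : ℝ) < Real.exp s := Real.exp_pos s
  have hA1 : Real.exp s - 1 ≤ s * Real.exp s := by
    have h := Real.add_one_le_exp (-s)
    have h2 := mul_le_mul_of_nonneg_left h hA.le
    rw [← Real.exp_add] at h2
    simp only [add_neg_cancel, Real.exp_zero] at h2
    nlinarith
  have hB : t - s + 1 ≤ Real.exp (t - s) := Real.add_one_le_exp _
  have hEt : Real.exp t = Real.exp s * Real.exp (t - s) := by
    rw [← Real.exp_add]; ring_nf
  nlinarith [mul_nonneg (sub_nonneg.2 hst) (by linarith : (0:ℝ) ≤ s * Real.exp s - (Real.exp s - 1)),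
    mul_nonneg (mul_nonneg hs.le hA.le) (by linarith : (0:ℝ) ≤ Real.exp (t - s) - (t - s + 1))]

/-- Multiplicative log-concavity of `x ↦ 1 - q^x` on natural exponents. -/
lemma key_lc (q : ℝ) (hq0 : 0 ≤ q) (hq1 : q ≤ 1) (a b c : ℕ)
    (ha : 1 ≤ a) (hab : a ≤ b) (hbc : b ≤ c) (hac : a * c ≤ b * b) :
    (1 - q ^ a) * (1 - q ^ c) ≤ (1 - q ^ b) * (1 - q ^ b) := by
  rcases eq_or_lt_of_le hq1 with rfl | hq1'
  · simp
  rcases eq_or_lt_of_le hq0 with rfl | hq0'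
  · rw [zero_pow (by omega : a ≠ 0), zero_pow (by omega : b ≠ 0), zero_pow (by omega : c ≠ 0)]
  -- now 0 < q < 1
  have hlq : Real.log q < 0 := Real.log_neg hq0' hq1'
  set L : ℝ := -Real.log q with hLdef
  have hL : 0 < L := by simp [hLdef]; linarith
  set f : ℝ → ℝ := fun t => Real.log (1 - Real.exp (-(L * Real.exp t))) with hfdef
  have hpos : ∀ t : ℝ, 0 < 1 - Real.exp (-(L * Real.exp t)) := by
    intro t
    have : Real.exp (-(L * Real.exp t)) < 1 := by
      rw [Real.exp_lt_one_iff]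
      have := Real.exp_pos t
      nlinarith
    linarith
  set f' : ℝ → ℝ := fun t =>
    L * Real.exp t * Real.exp (-(L * Real.exp t)) / (1 - Real.exp (-(L * Real.exp t))) with hf'def
  have hderiv : ∀ t : ℝ, HasDerivAt f (f' t) t := by
    intro t
    have h1 : HasDerivAt (fun t : ℝ => -(L * Real.exp t)) (-(L * Real.exp t)) t := by
      exact ((Real.hasDerivAt_exp t).const_mul L).neg
    have h2 : HasDerivAt (fun t : ℝ => Real.exp (-(L * Real.exp t)))
        (Real.exp (-(L * Real.exp t)) * (-(L * Real.exp t))) t :=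
      (Real.hasDerivAt_exp _).comp t h1
    have h3 : HasDerivAt (fun t : ℝ => 1 - Real.exp (-(L * Real.exp t)))
        (Real.exp (-(L * Real.exp t)) * (L * Real.exp t)) t := by
      simpa [mul_comm, mul_assoc, mul_left_comm] using h2.const_sub 1
    have h4 := h3.log (ne_of_gt (hpos t))
    convert h4 using 1
    simp [hf'def]
    ring
  -- f is concave
  have hanti : AntitoneOn (deriv f) (interior (Set.univ : Set ℝ)) := by
    intro x _ y _ hxy
    rw [(hderiv x).deriv, (hderiv y).deriv]
    set sx := L * Real.exp x with hsx
    set sy := L * Real.exp y with hsy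
    have hsx0 : 0 < sx := by positivity
    have hsxy : sx ≤ sy := by
      apply mul_le_mul_of_nonneg_left (Real.exp_le_exp.2 hxy) hL.le
    have hdx : 0 < 1 - Real.exp (-sx) := hpos x
    have hdy : 0 < 1 - Real.exp (-sy) := hpos y
    show sy * Real.exp (-sy) / (1 - Real.exp (-sy)) ≤ sx * Real.exp (-sx) / (1 - Real.exp (-sx))
    clear_value sx sy
    rw [div_le_div_iff₀ hdy hdx]
    have hkey := phi_anti hsx0 hsxy
    have hex : 0 < Real.exp sx := Real.exp_pos _
    have hey : 0 < Real.exp sy := Real.exp_pos _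
    apply le_of_mul_le_mul_right _ (show (0:ℝ) < Real.exp sx * Real.exp sy by positivity)
    have hu : Real.exp (-sx) * Real.exp sx = 1 := by rw [← Real.exp_add]; simp
    have hv : Real.exp (-sy) * Real.exp sy = 1 := by rw [← Real.exp_add]; simp
    have l1 : sy * Real.exp (-sy) * (1 - Real.exp (-sx)) * (Real.exp sx * Real.exp sy)
        = sy * (Real.exp sx - 1) := by
      linear_combination (sy * Real.exp sx - sy * (Real.exp (-sx) * Real.exp sx)) * hv
        - sy * hu
    have l2 : sx * Real.exp (-sx) * (1 - Real.exp (-sy)) * (Real.exp sx * Real.exp sy)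
        = sx * (Real.exp sy - 1) := by
      linear_combination (sx * Real.exp sy - sx * (Real.exp (-sy) * Real.exp sy)) * hu
        - sx * hv
    rw [l1, l2]
    exact hkey
  have hcont : ContinuousOn f Set.univ := by
    apply ContinuousOn.log
    · fun_prop
    · intro t _
      exact ne_of_gt (hpos t)
  have hdiff : DifferentiableOn ℝ f (interior (Set.univ : Set ℝ)) := fun t _ =>
    (hderiv t).differentiableAt.differentiableWithinAt
  have hconc : ConcaveOn ℝ Set.univ f :=
    AntitoneOn.concaveOn_of_deriv convex_univ hcont hdiff hanti
  -- f is monotone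
  have hmono : ∀ t1 t2 : ℝ, t1 ≤ t2 → f t1 ≤ f t2 := by
    intro t1 t2 h12
    apply Real.log_le_log (hpos t1)
    have : Real.exp (-(L * Real.exp t2)) ≤ Real.exp (-(L * Real.exp t1)) := by
      apply Real.exp_le_exp.2
      have := Real.exp_le_exp.2 h12
      nlinarith
    linarith
  -- evaluate f at logs of naturals
  have heval : ∀ m : ℕ, 1 ≤ m → f (Real.log m) = Real.log (1 - q ^ m) := by
    intro m hm
    have hm0 : (0 : ℝ) < m := by exact_mod_cast hm
    have h1 : Real.exp (Real.log m) = m := Real.exp_log hm0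
    have h2 : Real.exp (-(L * (m : ℝ))) = q ^ m := by
      rw [hLdef]
      rw [show -(-Real.log q * (m : ℝ)) = (m : ℝ) * Real.log q by ring]
      rw [← Real.log_pow, Real.exp_log (pow_pos hq0' m)]
    simp only [hfdef, h1, h2]
  have hqpow : ∀ m : ℕ, 1 ≤ m → 0 < 1 - q ^ m := by
    intro m hm
    have : q ^ m < 1 := pow_lt_one₀ hq0 hq1' (by omega)
    linarith
  have hc1 : 1 ≤ c := le_trans (le_trans ha hab) hbc
  have hb1 : 1 ≤ b := le_trans ha hab
  have ha0 : (0:ℝ) < a := by exact_mod_cast ha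
  have hb0 : (0:ℝ) < b := by exact_mod_cast hb1
  have hc0 : (0:ℝ) < c := by exact_mod_cast hc1
  -- midpoint of logs is at most log b
  have hmid : (Real.log a + Real.log c) / 2 ≤ Real.log b := by
    have h1 : Real.log ((a : ℝ) * c) ≤ Real.log ((b : ℝ) * b) := by
      apply Real.log_le_log (by positivity)
      exact_mod_cast hac
    rw [Real.log_mul (ne_of_gt ha0) (ne_of_gt hc0), Real.log_mul (ne_of_gt hb0) (ne_of_gt hb0)]
      at h1
    linarith
  have hcc := hconc.2 (Set.mem_univ (Real.log a)) (Set.mem_univ (Real.log c))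
    (by norm_num : (0:ℝ) ≤ 1/2) (by norm_num : (0:ℝ) ≤ 1/2) (by norm_num)
  simp only [smul_eq_mul] at hcc
  have hmid2 : f ((1/2 : ℝ) * Real.log a + (1/2 : ℝ) * Real.log c) ≤ f (Real.log b) := by
    apply hmono
    linarith
  have hsum : f (Real.log a) + f (Real.log c) ≤ 2 * f (Real.log b) := by linarith
  rw [heval a ha, heval c hc1, heval b hb1] at hsum
  have := Real.exp_le_exp.2 hsum
  rw [Real.exp_add, Real.exp_log (hqpow a ha), Real.exp_log (hqpow c hc1)] at this
  rw [show (2:ℝ) * Real.log (1 - q ^ b) = Real.log (1 - q^b) + Real.log (1 - q^b) by ring,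
    Real.exp_add, Real.exp_log (hqpow b hb1)] at this
  exact this

/-- For `n ≥ 1`, `D ≥ 1` and real `0 ≤ q ≤ 1`, the sequence
`E(j) = C(j+n-1,n-1) * (1 - q^{C(D-j+n-1,n-1)})`, `0 ≤ j < D`,
is log-concave: `E(j)^2 ≥ E(j-1) * E(j+1)` for `1 ≤ j ≤ D-2`. -/
theorem stmt8 (n D : ℕ) (hn : 1 ≤ n) (hD : 1 ≤ D) (q : ℝ) (hq0 : 0 ≤ q) (hq1 : q ≤ 1)
    (E : ℕ → ℝ)
    (hE : ∀ j, E j = (Nat.choose (j + n - 1) (n - 1) : ℝ) *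
      (1 - q ^ Nat.choose (D - j + n - 1) (n - 1))) :
    ∀ j : ℕ, 1 ≤ j → j ≤ D - 2 → E (j - 1) * E (j + 1) ≤ E j ^ 2 := by
  intro j hj1 hj2
  have hjD : j + 2 ≤ D := by omega
  set k := n - 1 with hk
  -- index normalizations
  have e1 : j - 1 + n - 1 = j + n - 2 := by omega
  have e2 : j + 1 + n - 1 = j + n := by omega
  have e3 : D - (j - 1) + n - 1 = D - j + n := by omega
  have e4 : D - (j + 1) + n - 1 = D - j + n - 2 := by omega
  rw [hE (j - 1), hE (j + 1), hE j, e1, e2, e3, e4]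
  -- binomial log-concavity for the A part
  have hA : Nat.choose (j + n - 2) k * Nat.choose (j + n) k ≤
      Nat.choose (j + n - 1) k * Nat.choose (j + n - 1) k := by
    have := nat_lc (j + n - 2) k
    rw [show j + n - 2 + 2 = j + n by omega, show j + n - 2 + 1 = j + n - 1 by omega] at this
    exact this
  -- binomial log-concavity for the socle exponents
  have hB : Nat.choose (D - j + n - 2) k * Nat.choose (D - j + n) k ≤
      Nat.choose (D - j + n - 1) k * Nat.choose (D - j + n - 1) k := by
    have := nat_lc (D - j + n - 2) k
    rw [show D - j + n - 2 + 2 = D - j + n by omega,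
      show D - j + n - 2 + 1 = D - j + n - 1 by omega] at this
    exact this
  set a := Nat.choose (D - j + n - 2) k with hadef
  set b := Nat.choose (D - j + n - 1) k with hbdef
  set c := Nat.choose (D - j + n) k with hcdef
  have ha1 : 1 ≤ a := Nat.choose_pos (by omega : k ≤ D - j + n - 2)
  have hab : a ≤ b := Nat.choose_le_choose k (by omega)
  have hbc : b ≤ c := Nat.choose_le_choose k (by omega)
  have hkey := key_lc q hq0 hq1 a b c ha1 hab hbc hB
  -- nonnegativity facts
  have hq1' : ∀ m : ℕ, 0 ≤ 1 - q ^ m := by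
    intro m
    have : q ^ m ≤ 1 := pow_le_one₀ hq0 hq1
    linarith
  have hAcast : (Nat.choose (j + n - 2) k : ℝ) * (Nat.choose (j + n) k : ℝ) ≤
      (Nat.choose (j + n - 1) k : ℝ) * (Nat.choose (j + n - 1) k : ℝ) := by
    exact_mod_cast hA
  calc (Nat.choose (j + n - 2) k : ℝ) * (1 - q ^ c) *
        ((Nat.choose (j + n) k : ℝ) * (1 - q ^ a))
      = ((Nat.choose (j + n - 2) k : ℝ) * (Nat.choose (j + n) k : ℝ)) *
        ((1 - q ^ a) * (1 - q ^ c)) := by ring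
    _ ≤ ((Nat.choose (j + n - 1) k : ℝ) * (Nat.choose (j + n - 1) k : ℝ)) *
        ((1 - q ^ b) * (1 - q ^ b)) := by
        apply mul_le_mul hAcast hkey (mul_nonneg (hq1' a) (hq1' c)) (by positivity)
    _ = ((Nat.choose (j + n - 1) k : ℝ) * (1 - q ^ b)) ^ 2 := by ring
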